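/- Let R : ℝ² → ℝ be a smooth, radially symmetric, rapidly decaying function. Then ∫_{ℝ²} (Δ³(R²))·R·(R + ρ ∂_ρ R) dξ = −2 ∫_{ℝ²} |∇Δ(R²)|² dξ. In particular this integral is nonpositive. -/

import Mathlib

open MeasureTheory Set

noncomputable section

abbrev E2 : Type := EuclideanSpace ℝ (Fin 2)

/-- The Laplacian on `ℝ²`, as the trace of the second derivative. -/
def lap {F : Type*} [NormedAddCommGroup F] [NormedSpace ℝ F] (f : E2 → F) (x : E2) : F :=
  ∑ i : Fin 2, iteratedFDeriv ℝ 2 f x ![EuclideanSpace.single i 1, EuclideanSpace.single i 1]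

open SchwartzMap

def ee (i : Fin 2) : E2 := EuclideanSpace.single i 1

def psi : (ℝ × ℝ) ≃ᵐ E2 :=
  (MeasurableEquiv.finTwoArrow (α := ℝ)).symm.trans (MeasurableEquiv.toLp 2 (Fin 2 → ℝ))

lemma psi_mp : MeasurePreserving psi volume volume :=
  ((EuclideanSpace.volume_preserving_symm_measurableEquiv_toLp (Fin 2)).symm _).comp
    ((volume_preserving_finTwoArrow ℝ).symm _)

lemma hpsi0 (a b : ℝ) : psi (a, b) = psi (0, b) + a • ee 0 := by
  ext j
  fin_cases j <;>
    simp [psi, ee, MeasurableEquiv.finTwoArrow, EuclideanSpace.single_apply,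
      MeasurableEquiv.coe_toLp, PiLp.add_apply, PiLp.smul_apply] <;> norm_num

lemma hpsi1 (a b : ℝ) : psi (a, b) = psi (a, 0) + b • ee 1 := by
  ext j
  fin_cases j <;>
    simp [psi, ee, MeasurableEquiv.finTwoArrow, EuclideanSpace.single_apply,
      MeasurableEquiv.coe_toLp, PiLp.add_apply, PiLp.smul_apply] <;> norm_num

lemma integrable_comp_psi {g : E2 → ℝ} (hg : Integrable g volume) :
    Integrable (fun p : ℝ × ℝ => g (psi p)) (volume.prod volume) := by
  have := (psi_mp.integrable_comp_emb psi.measurableEmbedding (g := g)).2 hg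
  exact this

lemma key0 (f : 𝓢(E2, ℝ)) (i : Fin 2) : ∫ x : E2, fderiv ℝ (⇑f) x (ee i) = 0 := by
  have hgS : Integrable (fun x : E2 => fderiv ℝ (⇑f) x (ee i)) volume := by
    refine (LineDeriv.lineDerivOpCLM ℝ 𝓢(E2, ℝ) (ee i) f).integrable.congr ?_
    filter_upwards with x
    rfl
  have hg2 : Integrable (fun p : ℝ × ℝ => fderiv ℝ (⇑f) (psi p) (ee i)) (volume.prod volume) :=
    integrable_comp_psi hgS
  have hf2 : Integrable (fun p : ℝ × ℝ => f (psi p)) (volume.prod volume) :=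
    integrable_comp_psi f.integrable
  rw [← psi_mp.integral_comp psi.measurableEmbedding]
  rw [Measure.volume_eq_prod ℝ ℝ]
  fin_cases i
  · rw [integral_prod_symm _ hg2]
    rw [show (0:ℝ) = ∫ (b : ℝ), (0:ℝ) by simp]
    refine integral_congr_ae ?_
    filter_upwards [hg2.prod_left_ae, hf2.prod_left_ae] with b h1 h2
    refine integral_eq_zero_of_hasDerivAt_of_integrable (f := fun a => f (psi (a, b))) ?_ h1 h2
    intro a
    have hc : HasDerivAt (fun a' : ℝ => psi (0, b) + a' • ee 0) (ee 0) a := by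
      simpa using ((hasDerivAt_id a).smul_const (ee 0)).const_add (psi (0, b))
    have hD := HasFDerivAt.comp_hasDerivAt (f := fun a' : ℝ => psi (0, b) + a' • ee 0)
      (x := a) (f.differentiableAt.hasFDerivAt (x := psi (0, b) + a • ee 0)) hc
    simpa only [Function.comp_def, ← hpsi0, Fin.zero_eta] using hD
  · rw [integral_prod _ hg2]
    rw [show (0:ℝ) = ∫ (a : ℝ), (0:ℝ) by simp]
    refine integral_congr_ae ?_
    filter_upwards [hg2.prod_right_ae, hf2.prod_right_ae] with a h1 h2
    refine integral_eq_zero_of_hasDerivAt_of_integrable (f := fun b => f (psi (a, b))) ?_ h1 h2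
    intro b
    have hc : HasDerivAt (fun b' : ℝ => psi (a, 0) + b' • ee 1) (ee 1) b := by
      simpa using ((hasDerivAt_id b).smul_const (ee 1)).const_add (psi (a, 0))
    have hD := HasFDerivAt.comp_hasDerivAt (f := fun b' : ℝ => psi (a, 0) + b' • ee 1)
      (x := b) (f.differentiableAt.hasFDerivAt (x := psi (a, 0) + b • ee 1)) hc
    simpa only [Function.comp_def, ← hpsi1, Fin.mk_one] using hD

lemma schwartz_htg (f : 𝓢(E2, ℝ)) : Function.HasTemperateGrowth ⇑f := by
  refine ⟨f.smooth ⊤, fun n => ⟨0, SchwartzMap.seminorm ℝ 0 n f, fun x => ?_⟩⟩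
  simpa using f.norm_iteratedFDeriv_le_seminorm ℝ n x

def mulS (f g : 𝓢(E2, ℝ)) : 𝓢(E2, ℝ) :=
  bilinLeftCLM (ContinuousLinearMap.mul ℝ ℝ) (schwartz_htg g) f

lemma mulS_apply (f g : 𝓢(E2, ℝ)) (x : E2) : mulS f g x = f x * g x := rfl

def xMul (i : Fin 2) (f : 𝓢(E2, ℝ)) : 𝓢(E2, ℝ) :=
  bilinLeftCLM (ContinuousLinearMap.mul ℝ ℝ)
    ((EuclideanSpace.proj i : E2 →L[ℝ] ℝ).hasTemperateGrowth) f

lemma xMul_apply (i : Fin 2) (f : 𝓢(E2, ℝ)) (x : E2) : xMul i f x = f x * x i := rfl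

def Pd (i : Fin 2) : 𝓢(E2, ℝ) →L[ℝ] 𝓢(E2, ℝ) := LineDeriv.lineDerivOpCLM ℝ 𝓢(E2, ℝ) (ee i)

lemma Pd_apply (i : Fin 2) (f : 𝓢(E2, ℝ)) (x : E2) : Pd i f x = fderiv ℝ (⇑f) x (ee i) :=
  SchwartzMap.lineDerivOp_apply_eq_fderiv _ f x

lemma coe_mulS (f g : 𝓢(E2, ℝ)) : ⇑(mulS f g) = fun x => f x * g x := rfl

lemma coe_xMul (i : Fin 2) (f : 𝓢(E2, ℝ)) : ⇑(xMul i f) = fun x => f x * x i := rfl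

lemma coe_Pd (i : Fin 2) (f : 𝓢(E2, ℝ)) : ⇑(Pd i f) = fun x => fderiv ℝ (⇑f) x (ee i) := by
  funext x; exact Pd_apply i f x

-- pointwise product rule
lemma pd_mulS (j : Fin 2) (f g : 𝓢(E2, ℝ)) :
    Pd j (mulS f g) = mulS (Pd j f) g + mulS f (Pd j g) := by
  ext x
  rw [SchwartzMap.add_apply, Pd_apply, mulS_apply, mulS_apply, Pd_apply, Pd_apply, coe_mulS]
  rw [fderiv_fun_mul f.differentiableAt g.differentiableAt]
  simp only [ContinuousLinearMap.add_apply, ContinuousLinearMap.coe_smul', Pi.smul_apply,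
    smul_eq_mul]
  ring

lemma pd_xMul (j i : Fin 2) (f : 𝓢(E2, ℝ)) :
    Pd j (xMul i f) = ((ee j) i) • f + xMul i (Pd j f) := by
  ext x
  rw [SchwartzMap.add_apply, Pd_apply, SchwartzMap.smul_apply, xMul_apply, Pd_apply, coe_xMul]
  have hproj : (fun y : E2 => f y * y i) = fun y : E2 => f y * (EuclideanSpace.proj i) y := rfl
  rw [hproj, fderiv_fun_mul f.differentiableAt ((EuclideanSpace.proj i).differentiableAt)]
  simp only [ContinuousLinearMap.fderiv, ContinuousLinearMap.add_apply,
    ContinuousLinearMap.coe_smul', Pi.smul_apply, smul_eq_mul]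
  have h1 : (EuclideanSpace.proj i) (ee j) = (ee j) i := rfl
  have h2 : (EuclideanSpace.proj i) x = x i := rfl
  rw [h1, h2]
  ring

lemma fderiv_fderiv_diffAt (f : 𝓢(E2, ℝ)) (x : E2) :
    DifferentiableAt ℝ (fderiv ℝ (⇑f)) x := by
  have h : ContDiff ℝ (⊤ : ℕ∞) (⇑f) := f.smooth ⊤
  exact ((h.fderiv_right (m := (⊤:ℕ∞)) (by exact_mod_cast le_rfl)).differentiable (by simp)).differentiableAt

lemma pd_pd_apply (i j : Fin 2) (f : 𝓢(E2, ℝ)) (x : E2) :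
    Pd i (Pd j f) x = fderiv ℝ (fderiv ℝ (⇑f)) x (ee i) (ee j) := by
  rw [Pd_apply, coe_Pd]
  rw [fderiv_clm_apply (fderiv_fderiv_diffAt f x) (differentiableAt_const (ee j))]
  simp

lemma pd_comm (i j : Fin 2) (f : 𝓢(E2, ℝ)) : Pd i (Pd j f) = Pd j (Pd i f) := by
  ext x
  rw [pd_pd_apply, pd_pd_apply]
  exact second_derivative_symmetric (f := ⇑f) (f' := fderiv ℝ (⇑f))
    (fun y => f.differentiableAt.hasFDerivAt) (fderiv_fderiv_diffAt f x).hasFDerivAt (ee i) (ee j)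

def LL (f : 𝓢(E2, ℝ)) : 𝓢(E2, ℝ) := ∑ i : Fin 2, Pd i (Pd i f)

lemma LL_eq (f : 𝓢(E2, ℝ)) : LL f = Pd 0 (Pd 0 f) + Pd 1 (Pd 1 f) := by
  rw [LL, Fin.sum_univ_two]

lemma LL_apply (f : 𝓢(E2, ℝ)) (x : E2) : LL f x = Pd 0 (Pd 0 f) x + Pd 1 (Pd 1 f) x := by
  rw [LL_eq]; rfl

lemma lap_coe (f : 𝓢(E2, ℝ)) : lap (⇑f) = ⇑(LL f) := by
  funext x
  rw [lap, LL_apply, Fin.sum_univ_two]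
  rw [iteratedFDeriv_two_apply, iteratedFDeriv_two_apply]
  simp only [Matrix.cons_val_zero, Matrix.cons_val_one, Matrix.head_cons]
  rw [pd_pd_apply, pd_pd_apply]
  rfl

def IS (f : 𝓢(E2, ℝ)) : ℝ := ∫ x : E2, f x

lemma IS_add (f g : 𝓢(E2, ℝ)) : IS (f + g) = IS f + IS g := by
  rw [IS, IS, IS, ← integral_add f.integrable g.integrable]
  congr 1

lemma IS_smul (c : ℝ) (f : 𝓢(E2, ℝ)) : IS (c • f) = c * IS f := by
  rw [IS, IS]
  simp only [SchwartzMap.smul_apply, smul_eq_mul]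
  exact integral_const_mul c _

lemma key0S (i : Fin 2) (f : 𝓢(E2, ℝ)) : IS (Pd i f) = 0 := by
  have h : IS (Pd i f) = ∫ x : E2, fderiv ℝ (⇑f) x (ee i) := by
    rw [IS]; simp only [Pd_apply]
  rw [h]; exact key0 f i

lemma ibpS (i : Fin 2) (f g : 𝓢(E2, ℝ)) :
    IS (mulS (Pd i f) g) = - IS (mulS f (Pd i g)) := by
  have h := key0S i (mulS f g)
  rw [pd_mulS, IS_add] at h
  linarith

lemma mulS_comm (f g : 𝓢(E2, ℝ)) : mulS f g = mulS g f := by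
  ext x; rw [mulS_apply, mulS_apply, mul_comm]

lemma ISmul_comm (f g : 𝓢(E2, ℝ)) : IS (mulS f g) = IS (mulS g f) := by rw [mulS_comm]

lemma ibp2 (i : Fin 2) (f g : 𝓢(E2, ℝ)) :
    IS (mulS (Pd i (Pd i f)) g) = IS (mulS f (Pd i (Pd i g))) := by
  have h1 := ibpS i (Pd i f) g
  have h2 := ibpS i f (Pd i g)
  have c1 := ISmul_comm (Pd i f) (Pd i g)
  have c2 := ISmul_comm g (Pd i f)
  have h3 := ibpS i g (Pd i f)
  linarith

lemma xibpS (i : Fin 2) (g : 𝓢(E2, ℝ)) : IS (xMul i (Pd i g)) = - IS g := by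
  have h := key0S i (xMul i g)
  rw [pd_xMul, IS_add, IS_smul] at h
  have he : (ee i) i = 1 := by simp [ee, EuclideanSpace.single_apply]
  rw [he] at h
  linarith

lemma mulS_add_left (f g h : 𝓢(E2, ℝ)) : mulS (f + g) h = mulS f h + mulS g h := by
  ext x; simp only [mulS_apply, SchwartzMap.add_apply]; ring

lemma mulS_smul_left (c : ℝ) (f h : 𝓢(E2, ℝ)) : mulS (c • f) h = c • mulS f h := by
  ext x; simp only [mulS_apply, SchwartzMap.smul_apply, smul_eq_mul]; ring

lemma mulS_LL_left (f g : 𝓢(E2, ℝ)) :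
    mulS (LL f) g = mulS (Pd 0 (Pd 0 f)) g + mulS (Pd 1 (Pd 1 f)) g := by
  rw [LL_eq, mulS_add_left]

lemma LLmove (f g : 𝓢(E2, ℝ)) : IS (mulS (LL f) g) = IS (mulS f (LL g)) := by
  have e1 : IS (mulS (LL f) g) =
      IS (mulS (Pd 0 (Pd 0 f)) g) + IS (mulS (Pd 1 (Pd 1 f)) g) := by
    rw [mulS_LL_left, IS_add]
  have e2 : IS (mulS (LL g) f) =
      IS (mulS (Pd 0 (Pd 0 g)) f) + IS (mulS (Pd 1 (Pd 1 g)) f) := by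
    rw [mulS_LL_left, IS_add]
  have h1 := ibp2 0 f g
  have h2 := ibp2 1 f g
  have c0 := ISmul_comm f (Pd 0 (Pd 0 g))
  have c1 := ISmul_comm f (Pd 1 (Pd 1 g))
  have c2 := ISmul_comm f (LL g)
  linarith

lemma lapE (f : 𝓢(E2, ℝ)) :
    IS (mulS (LL f) f) =
      -(IS (mulS (Pd 0 f) (Pd 0 f)) + IS (mulS (Pd 1 f) (Pd 1 f))) := by
  have e1 : IS (mulS (LL f) f) =
      IS (mulS (Pd 0 (Pd 0 f)) f) + IS (mulS (Pd 1 (Pd 1 f)) f) := by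
    rw [mulS_LL_left, IS_add]
  have h1 := ibpS 0 (Pd 0 f) f
  have h2 := ibpS 1 (Pd 1 f) f
  have c1 := ISmul_comm f (Pd 0 f)
  have c2 := ISmul_comm f (Pd 1 f)
  linarith

lemma mulS_add_right (f g h : 𝓢(E2, ℝ)) : mulS f (g + h) = mulS f g + mulS f h := by
  ext x; simp only [mulS_apply, SchwartzMap.add_apply]; ring

lemma mulS_smul_right (c : ℝ) (f h : 𝓢(E2, ℝ)) : mulS f (c • h) = c • mulS f h := by
  ext x; simp only [mulS_apply, SchwartzMap.smul_apply, smul_eq_mul]; ring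

lemma xMul_add (i : Fin 2) (a b : 𝓢(E2, ℝ)) : xMul i (a + b) = xMul i a + xMul i b := by
  ext x; simp only [xMul_apply, SchwartzMap.add_apply]; ring

lemma xMul_smul (i : Fin 2) (c : ℝ) (a : 𝓢(E2, ℝ)) : xMul i (c • a) = c • xMul i a := by
  ext x; simp only [xMul_apply, SchwartzMap.smul_apply, smul_eq_mul]; ring

lemma pdpd_xMul (j i : Fin 2) (h : 𝓢(E2, ℝ)) :
    Pd j (Pd j (xMul i h)) = (2 * ((ee j) i)) • Pd j h + xMul i (Pd j (Pd j h)) := by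
  rw [pd_xMul j i h, map_add, _root_.map_smul, pd_xMul j i (Pd j h)]
  ext x
  simp only [SchwartzMap.add_apply, SchwartzMap.smul_apply, smul_eq_mul]
  ring

lemma c1 (i : Fin 2) (h : 𝓢(E2, ℝ)) :
    LL (xMul i h) = (2:ℝ) • Pd i h + xMul i (LL h) := by
  rw [LL_eq, pdpd_xMul 0 i h, pdpd_xMul 1 i h, LL_eq, xMul_add]
  have e00 : ((ee 0) (0 : Fin 2)) = (1:ℝ) := by simp [ee, EuclideanSpace.single_apply]
  have e01 : ((ee 0) (1 : Fin 2)) = (0:ℝ) := by simp [ee, EuclideanSpace.single_apply]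
  have e10 : ((ee 1) (0 : Fin 2)) = (0:ℝ) := by simp [ee, EuclideanSpace.single_apply]
  have e11 : ((ee 1) (1 : Fin 2)) = (1:ℝ) := by simp [ee, EuclideanSpace.single_apply]
  fin_cases i <;> ext x <;>
    simp only [Fin.mk_zero, Fin.mk_one, Fin.isValue, e00, e01, e10, e11,
      SchwartzMap.add_apply, SchwartzMap.smul_apply, smul_eq_mul] <;> ring

lemma c2 (i : Fin 2) (f : 𝓢(E2, ℝ)) : LL (Pd i f) = Pd i (LL f) := by
  rw [LL_eq, LL_eq, map_add]
  rw [pd_comm 0 i f, pd_comm 0 i (Pd 0 f), pd_comm 1 i f, pd_comm 1 i (Pd 1 f)]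

lemma mstep (i : Fin 2) (h : 𝓢(E2, ℝ)) :
    IS (mulS h (xMul i (Pd i h))) = -(1/2) * IS (mulS h h) := by
  have hpd : Pd i (mulS h h) = (2:ℝ) • mulS h (Pd i h) := by
    rw [pd_mulS, mulS_comm (Pd i h) h]
    ext x; simp only [SchwartzMap.add_apply, SchwartzMap.smul_apply, smul_eq_mul]; ring
  have hx := xibpS i (mulS h h)
  rw [hpd, xMul_smul, IS_smul] at hx
  have h2 : mulS h (xMul i (Pd i h)) = xMul i (mulS h (Pd i h)) := by
    ext x; simp only [mulS_apply, xMul_apply]; ring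
  rw [h2]; linarith

lemma KperJ (j i : Fin 2) (w : 𝓢(E2, ℝ)) :
    IS (mulS (Pd j (Pd j w)) (xMul i (Pd i w))) =
      -(((ee j) i) * IS (mulS (Pd j w) (Pd i w))) + (1/2) * IS (mulS (Pd j w) (Pd j w)) := by
  have h1 := ibpS j (Pd j w) (xMul i (Pd i w))
  have hx : Pd j (xMul i (Pd i w)) = ((ee j) i) • Pd i w + xMul i (Pd i (Pd j w)) := by
    rw [pd_xMul j i (Pd i w), pd_comm j i w]
  rw [hx, mulS_add_right, mulS_smul_right, IS_add, IS_smul] at h1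
  have h2 := mstep i (Pd j w)
  linarith

lemma gradient_eq_toDual_symm (f : E2 → ℝ) (ξ : E2) :
    gradient f ξ = (InnerProductSpace.toDual ℝ E2).symm (fderiv ℝ f ξ) := rfl

lemma inner_gradient_fderiv (f : E2 → ℝ) (ξ v : E2) :
    (inner ℝ (gradient f ξ) v : ℝ) = fderiv ℝ f ξ v := by
  rw [gradient_eq_toDual_symm]
  exact InnerProductSpace.toDual_symm_apply

lemma xi_decomp (ξ : E2) : ξ = ξ 0 • ee 0 + ξ 1 • ee 1 := by
  ext j
  fin_cases j <;> simp [ee, EuclideanSpace.single_apply]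

lemma inner_grad (f : E2 → ℝ) (ξ : E2) :
    (inner ℝ ξ (gradient f ξ) : ℝ) = ξ 0 * fderiv ℝ f ξ (ee 0) + ξ 1 * fderiv ℝ f ξ (ee 1) := by
  rw [real_inner_comm, inner_gradient_fderiv]
  calc fderiv ℝ f ξ ξ = fderiv ℝ f ξ (ξ 0 • ee 0 + ξ 1 • ee 1) := by rw [← xi_decomp]
    _ = ξ 0 * fderiv ℝ f ξ (ee 0) + ξ 1 * fderiv ℝ f ξ (ee 1) := by
        rw [map_add, _root_.map_smul, _root_.map_smul]; simp [smul_eq_mul]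

lemma grad_norm_sq (f : E2 → ℝ) (ξ : E2) :
    ‖gradient f ξ‖ ^ 2 = (fderiv ℝ f ξ (ee 0)) ^ 2 + (fderiv ℝ f ξ (ee 1)) ^ 2 := by
  have hcoord : ∀ j : Fin 2, gradient f ξ j = fderiv ℝ f ξ (ee j) := by
    intro j
    have h2 : (inner ℝ (gradient f ξ) (ee j) : ℝ) = fderiv ℝ f ξ (ee j) :=
      inner_gradient_fderiv f ξ (ee j)
    rw [← h2, ee]
    rw [EuclideanSpace.inner_single_right]
    simp
  rw [EuclideanSpace.norm_eq, Real.sq_sqrt (by positivity)]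
  rw [Fin.sum_univ_two, hcoord 0, hcoord 1]
  simp [Real.norm_eq_abs, sq_abs]

lemma e00 : ((ee 0) (0 : Fin 2)) = (1:ℝ) := by simp [ee, EuclideanSpace.single_apply]
lemma e01 : ((ee 0) (1 : Fin 2)) = (0:ℝ) := by simp [ee, EuclideanSpace.single_apply]
lemma e10 : ((ee 1) (0 : Fin 2)) = (0:ℝ) := by simp [ee, EuclideanSpace.single_apply]
lemma e11 : ((ee 1) (1 : Fin 2)) = (1:ℝ) := by simp [ee, EuclideanSpace.single_apply]

lemma Kzero (w : 𝓢(E2, ℝ)) :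
    IS (mulS (LL w) (xMul 0 (Pd 0 w))) + IS (mulS (LL w) (xMul 1 (Pd 1 w))) = 0 := by
  have k00 := KperJ 0 0 w
  have k10 := KperJ 1 0 w
  have k01 := KperJ 0 1 w
  have k11 := KperJ 1 1 w
  rw [e00] at k00
  rw [e10] at k10
  rw [e01] at k01
  rw [e11] at k11
  have h0 : IS (mulS (LL w) (xMul 0 (Pd 0 w))) =
      IS (mulS (Pd 0 (Pd 0 w)) (xMul 0 (Pd 0 w))) +
        IS (mulS (Pd 1 (Pd 1 w)) (xMul 0 (Pd 0 w))) := by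
    rw [mulS_LL_left, IS_add]
  have h1 : IS (mulS (LL w) (xMul 1 (Pd 1 w))) =
      IS (mulS (Pd 0 (Pd 0 w)) (xMul 1 (Pd 1 w))) +
        IS (mulS (Pd 1 (Pd 1 w)) (xMul 1 (Pd 1 w))) := by
    rw [mulS_LL_left, IS_add]
  linarith

lemma main_IS (u : 𝓢(E2, ℝ)) :
    IS (mulS (LL (LL (LL u))) u)
      + (1/2) * (IS (mulS (LL (LL (LL u))) (xMul 0 (Pd 0 u)))
               + IS (mulS (LL (LL (LL u))) (xMul 1 (Pd 1 u))))
      = -2 * (IS (mulS (Pd 0 (LL u)) (Pd 0 (LL u)))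
            + IS (mulS (Pd 1 (LL u)) (Pd 1 (LL u)))) := by
  set w := LL u with hw
  have hA : IS (mulS (LL (LL w)) u) = IS (mulS (LL w) w) := by
    rw [LLmove (LL w) u, ISmul_comm (LL w) (LL u), ← hw]
  have hT : ∀ i : Fin 2, IS (mulS (LL (LL w)) (xMul i (Pd i u))) =
      2 * IS (mulS (LL w) (Pd i (Pd i u))) + IS (mulS (LL w) (xMul i (Pd i w))) := by
    intro i
    rw [LLmove (LL w) (xMul i (Pd i u)), c1 i (Pd i u), c2 i u, ← hw]
    rw [mulS_add_right, mulS_smul_right, IS_add, IS_smul]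
  have hsum : IS (mulS (LL w) (Pd 0 (Pd 0 u))) + IS (mulS (LL w) (Pd 1 (Pd 1 u)))
      = IS (mulS (LL w) w) := by
    rw [hw, LL_eq u, mulS_add_right, IS_add]
  have hK := Kzero w
  have hlapw := lapE w
  have hLLL : LL (LL (LL u)) = LL (LL w) := by rw [hw]
  rw [hLLL, hA, hT 0, hT 1, hlapw]
  linarith

/-- For a smooth, radially symmetric, rapidly decaying `R : ℝ² → ℝ`,
`∫ Δ³(R²) · R · (R + ρ ∂_ρ R) dξ = −2 ∫ |∇Δ(R²)|² dξ`; in particular this is nonpositive. -/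
theorem stmt5 (R : SchwartzMap E2 ℝ)
    (hrad : ∀ x y : E2, ‖x‖ = ‖y‖ → R x = R y) :
    (∫ ξ : E2, lap (lap (lap (fun x => (R x) ^ 2))) ξ *
        (R ξ * (R ξ + (inner ℝ ξ (gradient (fun x => R x) ξ) : ℝ)))
      = -2 * ∫ ξ : E2, ‖gradient (lap (fun x => (R x) ^ 2)) ξ‖ ^ 2) ∧
    (∫ ξ : E2, lap (lap (lap (fun x => (R x) ^ 2))) ξ *
        (R ξ * (R ξ + (inner ℝ ξ (gradient (fun x => R x) ξ) : ℝ))) ≤ 0) := by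
  have hfun : (fun x => (R x) ^ 2) = ⇑(mulS R R) := by
    funext x; rw [mulS_apply]; ring
  set u : 𝓢(E2, ℝ) := mulS R R with hu
  set w : 𝓢(E2, ℝ) := LL u with hw
  set S : 𝓢(E2, ℝ) := LL (LL w) with hS
  set Q : 𝓢(E2, ℝ) :=
    mulS S u + (1/2 : ℝ) • (mulS S (xMul 0 (Pd 0 u)) + mulS S (xMul 1 (Pd 1 u))) with hQ
  have hlap3 : lap (lap (lap (fun x => (R x) ^ 2))) = ⇑S := by
    rw [hfun, lap_coe, lap_coe, lap_coe]
  have hLHSfun : (fun ξ : E2 => lap (lap (lap (fun x => (R x) ^ 2))) ξ *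
        (R ξ * (R ξ + (inner ℝ ξ (gradient (fun x => R x) ξ) : ℝ)))) = ⇑Q := by
    funext ξ
    rw [hlap3]
    have hgr : (inner ℝ ξ (gradient (fun x => R x) ξ) : ℝ)
        = ξ 0 * (Pd 0 R) ξ + ξ 1 * (Pd 1 R) ξ := by
      rw [Pd_apply, Pd_apply]
      exact inner_grad (fun x => R x) ξ
    have hu0 : u ξ = R ξ * R ξ := mulS_apply R R ξ
    have hpd : ∀ i : Fin 2, (Pd i u) ξ = (Pd i R) ξ * R ξ + R ξ * (Pd i R) ξ := by
      intro i
      rw [hu, pd_mulS, SchwartzMap.add_apply, mulS_apply, mulS_apply]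
    simp only [hQ, SchwartzMap.add_apply, SchwartzMap.smul_apply, smul_eq_mul, mulS_apply,
      xMul_apply, hgr, hu0, hpd]
    ring
  have hRHSfun : (fun ξ : E2 => ‖gradient (lap (fun x => (R x) ^ 2)) ξ‖ ^ 2)
      = ⇑(mulS (Pd 0 w) (Pd 0 w) + mulS (Pd 1 w) (Pd 1 w)) := by
    funext ξ
    rw [hfun, lap_coe, grad_norm_sq]
    simp only [SchwartzMap.add_apply, mulS_apply, Pd_apply]
    ring
  have hLHS : (∫ ξ : E2, lap (lap (lap (fun x => (R x) ^ 2))) ξ *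
        (R ξ * (R ξ + (inner ℝ ξ (gradient (fun x => R x) ξ) : ℝ)))) = IS Q :=
    congrArg (fun F : E2 → ℝ => ∫ ξ, F ξ) hLHSfun
  have hRHS : (∫ ξ : E2, ‖gradient (lap (fun x => (R x) ^ 2)) ξ‖ ^ 2)
      = IS (mulS (Pd 0 w) (Pd 0 w) + mulS (Pd 1 w) (Pd 1 w)) :=
    congrArg (fun F : E2 → ℝ => ∫ ξ, F ξ) hRHSfun
  have hmainIS := main_IS u
  rw [← hw, ← hS] at hmainIS
  have hQval : IS Q = -2 * (IS (mulS (Pd 0 w) (Pd 0 w)) + IS (mulS (Pd 1 w) (Pd 1 w))) := by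
    rw [hQ, IS_add, IS_smul, IS_add]
    linarith
  have hJ0 : 0 ≤ IS (mulS (Pd 0 w) (Pd 0 w)) := by
    refine integral_nonneg fun x => ?_
    rw [mulS_apply]; exact mul_self_nonneg _
  have hJ1 : 0 ≤ IS (mulS (Pd 1 w) (Pd 1 w)) := by
    refine integral_nonneg fun x => ?_
    rw [mulS_apply]; exact mul_self_nonneg _
  have hmain : (∫ ξ : E2, lap (lap (lap (fun x => (R x) ^ 2))) ξ *
        (R ξ * (R ξ + (inner ℝ ξ (gradient (fun x => R x) ξ) : ℝ))))
      = -2 * ∫ ξ : E2, ‖gradient (lap (fun x => (R x) ^ 2)) ξ‖ ^ 2 := by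
    rw [hLHS, hRHS, hQval, IS_add]
  refine ⟨hmain, ?_⟩
  rw [hmain, hRHS, IS_add]
  nlinarith

end
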